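/- arXiv:2508.13038 — 2 statements merged into one kernel-verified Lean document; each statement's English description precedes it below -/
import Mathlib

section
/- Let Y be a metric space and K ⊆ Y a nonempty compact subset. Suppose V := Y \ K is dense in Y and every point of V is isolated in Y. Let π : V → K be a map with dist(v, π(v)) = inf{dist(v, k) : k ∈ K} for all v ∈ V. Suppose K = U₁ ∪ U₂ where U₁ and U₂ are nonempty, disjoint, and open in the subspace topology of K. Set Dᵢ := π⁻¹(Uᵢ) for i = 1, 2. Then D₁ and D₂ are nonempty and disjoint, V = D₁ ∪ D₂, and the closure of Dᵢ in Y equals Dᵢ ∪ Uᵢ for i = 1, 2. -/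
/-- Let `Y` be a metric space and `K ⊆ Y` a nonempty compact subset. Suppose
`V := Y \ K` is dense in `Y` and every point of `V` is isolated in `Y`. Let
`π : V → K` be a nearest-point projection onto `K`. If `K = U₁ ∪ U₂` with `U₁, U₂`
nonempty, disjoint and open in the subspace topology of `K`, and `Dᵢ := π⁻¹(Uᵢ)`,
then `D₁` and `D₂` are nonempty and disjoint, `V = D₁ ∪ D₂`, and the closure of
`Dᵢ` in `Y` equals `Dᵢ ∪ Uᵢ`. -/
theorem nearest_point_decomposition
    {Y : Type*} [MetricSpace Y] (K : Set Y) (hK : IsCompact K) (hKne : K.Nonempty)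
    (V : Set Y) (hV : V = Kᶜ) (hVdense : Dense V)
    (hViso : ∀ v ∈ V, IsOpen ({v} : Set Y))
    (π : Y → Y) (hπK : ∀ v ∈ V, π v ∈ K)
    (hπd : ∀ v ∈ V, dist v (π v) = Metric.infDist v K)
    (U₁ U₂ : Set Y) (hUnion : U₁ ∪ U₂ = K)
    (hU₁ne : U₁.Nonempty) (hU₂ne : U₂.Nonempty) (hdisj : Disjoint U₁ U₂)
    (hU₁open : ∃ O : Set Y, IsOpen O ∧ U₁ = O ∩ K)
    (hU₂open : ∃ O : Set Y, IsOpen O ∧ U₂ = O ∩ K) :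
    ({v ∈ V | π v ∈ U₁}.Nonempty ∧ {v ∈ V | π v ∈ U₂}.Nonempty) ∧
      Disjoint {v ∈ V | π v ∈ U₁} {v ∈ V | π v ∈ U₂} ∧
      V = {v ∈ V | π v ∈ U₁} ∪ {v ∈ V | π v ∈ U₂} ∧
      closure {v ∈ V | π v ∈ U₁} = {v ∈ V | π v ∈ U₁} ∪ U₁ ∧
      closure {v ∈ V | π v ∈ U₂} = {v ∈ V | π v ∈ U₂} ∪ U₂ := by
  -- A key approximation fact: near any point of `Uᵢ` there are points of `Dᵢ`.
  have key : ∀ (U : Set Y), (∃ O : Set Y, IsOpen O ∧ U = O ∩ K) →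
      ∀ k ∈ U, ∀ ε > 0, ∃ v, (v ∈ V ∧ π v ∈ U) ∧ dist v k < ε := by
    rintro U ⟨O, hO, rfl⟩ k hk ε hε
    obtain ⟨hkO, hkK⟩ := hk
    obtain ⟨r, hr, hball⟩ := Metric.isOpen_iff.1 hO k hkO
    set δ := min ε r with hδdef
    have hδ : 0 < δ := lt_min hε hr
    obtain ⟨v, hvball, hvV⟩ :=
      Metric.dense_iff.1 hVdense k (δ / 2) (by linarith)
    have hvk : dist v k < δ / 2 := by
      simpa [dist_comm] using Metric.mem_ball.1 hvball
    have hinf : Metric.infDist v K ≤ dist v k := Metric.infDist_le_dist_of_mem hkK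
    have hπvk : dist (π v) k < δ := by
      calc dist (π v) k ≤ dist (π v) v + dist v k := dist_triangle _ _ _
        _ = dist v (π v) + dist v k := by rw [dist_comm]
        _ = Metric.infDist v K + dist v k := by rw [hπd v hvV]
        _ ≤ dist v k + dist v k := by linarith
        _ < δ := by linarith
    have hπO : π v ∈ O := hball (Metric.mem_ball.2 (lt_of_lt_of_le hπvk (min_le_right _ _)))
    have hfin : dist v k < ε := by
      have h1 : δ ≤ ε := min_le_left _ _
      linarith
    exact ⟨v, ⟨hvV, hπO, hπK v hvV⟩, hfin⟩
  -- Disjointness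
  have hDdisj : Disjoint {v ∈ V | π v ∈ U₁} {v ∈ V | π v ∈ U₂} := by
    rw [Set.disjoint_left]
    rintro v ⟨hvV, hv1⟩ ⟨_, hv2⟩
    exact Set.disjoint_left.1 hdisj hv1 hv2
  -- Closure computation, generic in `U`
  have hclos : ∀ (U U' : Set Y), (∃ O : Set Y, IsOpen O ∧ U = O ∩ K) →
      (∃ O : Set Y, IsOpen O ∧ U' = O ∩ K) → U ∪ U' = K → Disjoint U U' →
      closure {v ∈ V | π v ∈ U} = {v ∈ V | π v ∈ U} ∪ U := by
    intro U U' hUo hU'o hUU hd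
    apply Set.Subset.antisymm
    · intro y hy
      by_cases hyV : y ∈ V
      · left
        have := (mem_closure_iff_nhds.1 hy) {y}
          ((hViso y hyV).mem_nhds rfl)
        obtain ⟨z, hz1, hz2⟩ := this
        rcases hz1 with rfl
        exact hz2
      · -- y ∈ K
        have hyK : y ∈ K := by
          rw [hV] at hyV; simpa using hyV
        rw [← hUU] at hyK
        rcases hyK with hyU | hyU'
        · exact Or.inr hyU
        · exfalso
          obtain ⟨O', hO', hU'eq⟩ := hU'o
          have hyO' : y ∈ O' := (hU'eq ▸ hyU').1
          have hyKmem : y ∈ K := by rw [← hUU]; exact Or.inr hyU'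
          obtain ⟨r, hr, hball⟩ := Metric.isOpen_iff.1 hO' y hyO'
          obtain ⟨v, ⟨hvV, hvU⟩, hvy⟩ := Metric.mem_closure_iff.1 hy (r / 2) (by linarith)
          have hvy' : dist v y < r / 2 := by rwa [dist_comm] at hvy
          have hinf : Metric.infDist v K ≤ dist v y := Metric.infDist_le_dist_of_mem hyKmem
          have hπvy : dist (π v) y < r := by
            calc dist (π v) y ≤ dist (π v) v + dist v y := dist_triangle _ _ _
              _ = dist v (π v) + dist v y := by rw [dist_comm]
              _ = Metric.infDist v K + dist v y := by rw [hπd v hvV]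
              _ ≤ dist v y + dist v y := by linarith
              _ < r := by linarith
          have : π v ∈ U' := by
            rw [hU'eq]
            exact ⟨hball (Metric.mem_ball.2 hπvy), hπK v hvV⟩
          exact Set.disjoint_left.1 hd hvU this
    · rintro y (hy | hy)
      · exact subset_closure hy
      · rw [Metric.mem_closure_iff]
        intro ε hε
        obtain ⟨v, hv, hvy⟩ := key U hUo y hy ε hε
        exact ⟨v, hv, by rwa [dist_comm]⟩
  refine ⟨⟨?_, ?_⟩, hDdisj, ?_, ?_, ?_⟩
  · obtain ⟨k, hk⟩ := hU₁ne
    obtain ⟨v, hv, _⟩ := key U₁ hU₁open k hk 1 one_pos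
    exact ⟨v, hv⟩
  · obtain ⟨k, hk⟩ := hU₂ne
    obtain ⟨v, hv, _⟩ := key U₂ hU₂open k hk 1 one_pos
    exact ⟨v, hv⟩
  · ext v
    constructor
    · intro hvV
      have : π v ∈ U₁ ∪ U₂ := by rw [hUnion]; exact hπK v hvV
      rcases this with h | h
      · exact Or.inl ⟨hvV, h⟩
      · exact Or.inr ⟨hvV, h⟩
    · rintro (⟨h, _⟩ | ⟨h, _⟩) <;> exact h
  · exact hclos U₁ U₂ hU₁open hU₂open hUnion hdisj
  · exact hclos U₂ U₁ hU₂open hU₁open (by rw [Set.union_comm]; exact hUnion) hdisj.symm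
end

section
/- Let Y and X be connected, locally finite simple graphs, and let a group H act on Y and on X by graph automorphisms, with the action of H on the vertices of Y transitive. Let f be an injective H-equivariant graph homomorphism from Y to X. Then f is a metrically proper embedding: for every n ∈ ℕ there exists m ∈ ℕ such that for all vertices u, v of Y, if d_X(f(u), f(v)) ≤ n then d_Y(u, v) ≤ m. -/
open SimpleGraph

private lemma dist_smul_eq {V : Type*} (G : SimpleGraph V) (hc : G.Connected)
    {H : Type*} [Group H] [MulAction H V]
    (haut : ∀ (h : H) (u v : V), G.Adj u v ↔ G.Adj (h • u) (h • v))
    (h : H) (u v : V) : G.dist (h • u) (h • v) = G.dist u v := by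
  have key : ∀ (g : H) (a b : V), G.dist (g • a) (g • b) ≤ G.dist a b := by
    intro g a b
    obtain ⟨p, hp⟩ := hc.exists_walk_length_eq_dist a b
    let F : G →g G := ⟨fun x => g • x, fun ha => (haut g _ _).mp ha⟩
    have hle := SimpleGraph.dist_le (p.map F)
    rw [SimpleGraph.Walk.length_map, hp] at hle
    exact hle
  refine le_antisymm (key h u v) ?_
  have := key h⁻¹ (h • u) (h • v)
  simpa using this

private lemma ball_finite {V : Type*} (G : SimpleGraph V) (hc : G.Connected)
    (hlf : G.LocallyFinite) (x0 : V) :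
    ∀ n : ℕ, {x | G.dist x0 x ≤ n}.Finite := by
  intro n
  induction n with
  | zero =>
    have : {x | G.dist x0 x ≤ 0} ⊆ {x0} := by
      intro x hx
      simp only [Set.mem_setOf_eq, Nat.le_zero] at hx
      exact (hc.dist_eq_zero_iff.mp hx).symm
    exact (Set.finite_singleton x0).subset this
  | succ n ih =>
    have hsub : {x | G.dist x0 x ≤ n + 1} ⊆
        {x | G.dist x0 x ≤ n} ∪ ⋃ y ∈ {x | G.dist x0 x ≤ n}, G.neighborSet y := by
      intro x hx
      simp only [Set.mem_setOf_eq] at hx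
      by_cases hle : G.dist x0 x ≤ n
      · exact Or.inl hle
      · have hd : G.dist x0 x = n + 1 := le_antisymm hx (Nat.not_le.mp hle)
        obtain ⟨p, hp⟩ := hc.exists_walk_length_eq_dist x x0
        rw [SimpleGraph.dist_comm, hd] at hp
        cases p with
        | nil => simp at hp
        | cons h r =>
          right
          refine Set.mem_iUnion₂.mpr ⟨_, ?_, h.symm⟩
          simp only [SimpleGraph.Walk.length_cons, Nat.add_right_cancel_iff] at hp
          calc G.dist x0 _ ≤ r.reverse.length := SimpleGraph.dist_le r.reverse
            _ = r.length := r.length_reverse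
            _ = n := hp
    refine (ih.union (ih.biUnion fun y _ => ?_)).subset hsub
    exact (G.neighborSet y).toFinite
  
/-- Let `Y` and `X` be connected, locally finite simple graphs on which a group `H`
acts by graph automorphisms, with the action on the vertices of `Y` transitive.
Any injective `H`-equivariant graph homomorphism `f : Y → X` is a metrically proper
embedding: for every `n` there is `m` such that `d_X(f u, f v) ≤ n` implies
`d_Y(u, v) ≤ m`. -/
theorem equivariant_embedding_metrically_proper
    {VY VX : Type*} (Y : SimpleGraph VY) (X : SimpleGraph VX)
    (hYconn : Y.Connected) (hXconn : X.Connected)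
    (hYlf : Y.LocallyFinite) (hXlf : X.LocallyFinite)
    (H : Type*) [Group H] [MulAction H VY] [MulAction H VX]
    (hYaut : ∀ (h : H) (u v : VY), Y.Adj u v ↔ Y.Adj (h • u) (h • v))
    (hXaut : ∀ (h : H) (u v : VX), X.Adj u v ↔ X.Adj (h • u) (h • v))
    (htrans : ∀ u v : VY, ∃ h : H, h • u = v)
    (f : VY → VX) (hinj : Function.Injective f)
    (hequiv : ∀ (h : H) (u : VY), f (h • u) = h • f u)
    (fhom : ∀ u v : VY, Y.Adj u v → X.Adj (f u) (f v)) :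
    ∀ n : ℕ, ∃ m : ℕ, ∀ u v : VY, X.dist (f u) (f v) ≤ n → Y.dist u v ≤ m := by
  intro n
  have : Nonempty VY := hYconn.nonempty
  obtain ⟨y0⟩ := this
  -- the preimage of the ball of radius n around f y0 is finite
  have hball : {x | X.dist (f y0) x ≤ n}.Finite := ball_finite X hXconn hXlf (f y0) n
  have hpre : {u | X.dist (f y0) (f u) ≤ n}.Finite := by
    have : {u | X.dist (f y0) (f u) ≤ n} = f ⁻¹' {x | X.dist (f y0) x ≤ n} := rfl
    rw [this]
    exact hball.preimage hinj.injOn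
  -- bound the Y-distance to y0 on this finite set
  have himg : ((Y.dist y0) '' {u | X.dist (f y0) (f u) ≤ n}).Finite := hpre.image _
  obtain ⟨m, hm⟩ := himg.bddAbove
  refine ⟨m, fun u v huv => ?_⟩
  obtain ⟨h, hh⟩ := htrans u y0
  have hXd : X.dist (f y0) (f (h • v)) ≤ n := by
    rw [← hh, hequiv, hequiv, dist_smul_eq X hXconn hXaut]
    exact huv
  have hmem : (h • v) ∈ {u | X.dist (f y0) (f u) ≤ n} := hXd
  have : Y.dist y0 (h • v) ≤ m := hm (Set.mem_image_of_mem _ hmem)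
  calc Y.dist u v = Y.dist (h • u) (h • v) := (dist_smul_eq Y hYconn hYaut h u v).symm
    _ = Y.dist y0 (h • v) := by rw [hh]
    _ ≤ m := this
end
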